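/- Let n_d ≥ 1, let σ_o, σ̃ > 0 with r_σ = σ̃²/σ_o², and let τ_δ > 0 satisfy r_σ (τ_δ² + τ_δ) < 1. Let X and Z be independent random vectors in ℝ^{n_d} whose coordinates are independent centered Gaussians with variances σ_o² and σ̃² respectively. Then E[ exp( (τ_δ/(2σ_o²)) ( ‖Z‖² − 2⟨X, Z⟩ ) ) ] = [ 1 − (τ_δ + τ_δ²) r_σ ]^{−n_d/2}. -/

import Mathlib

open MeasureTheory ProbabilityTheory

section Aux
open Real
open scoped NNReal ENNReal

lemma exp_quad_eq' (b c : ℝ) (hb : b ≠ 0) (x : ℝ) :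
    Real.exp (-b * x ^ 2 + c * x)
      = Real.exp (c ^ 2 / (4 * b)) * Real.exp (-b * (x - c / (2 * b)) ^ 2) := by
  rw [← Real.exp_add]; congr 1; field_simp; ring

lemma integrable_exp_quad (b c : ℝ) (hb : 0 < b) :
    Integrable (fun x : ℝ => Real.exp (-b * x ^ 2 + c * x)) := by
  simp_rw [exp_quad_eq' b c hb.ne']
  exact ((integrable_exp_neg_mul_sq hb).comp_sub_right (c / (2 * b))).const_mul _

lemma integral_exp_quad (b c : ℝ) (hb : 0 < b) :
    ∫ x : ℝ, Real.exp (-b * x ^ 2 + c * x)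
      = Real.sqrt (π / b) * Real.exp (c ^ 2 / (4 * b)) := by
  simp_rw [exp_quad_eq' b c hb.ne']
  rw [integral_const_mul,
    integral_sub_right_eq_self (fun x => Real.exp (-b * x ^ 2)) (c / (2 * b)),
    integral_gaussian]
  ring

lemma gaussian_density_integral (v : ℝ) (hv : 0 < v) (g : ℝ → ℝ) :
    ∫ x, g x ∂(gaussianReal 0 (Real.toNNReal v))
      = ∫ x, gaussianPDFReal 0 (Real.toNNReal v) x * g x := by
  rw [gaussianReal_of_var_ne_zero 0 (Real.toNNReal_pos.mpr hv).ne']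
  rw [show gaussianPDF 0 (Real.toNNReal v)
      = fun x => ((Real.toNNReal (gaussianPDFReal 0 (Real.toNNReal v) x) : ℝ≥0) : ℝ≥0∞)
    from rfl]
  rw [integral_withDensity_eq_integral_smul ((measurable_gaussianPDFReal _ _).real_toNNReal) g]
  congr 1; ext x
  simp [NNReal.smul_def, Real.coe_toNNReal _ (gaussianPDFReal_nonneg _ _ x)]

lemma integral_exp_quad_gaussian (v a t : ℝ) (hv : 0 < v) (h : 2 * a * v < 1) :
    ∫ x, Real.exp (a * x ^ 2 + t * x) ∂(gaussianReal 0 (Real.toNNReal v))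
      = (1 - 2 * a * v) ^ (-(1:ℝ) / 2) * Real.exp (t ^ 2 * v / (2 * (1 - 2 * a * v))) := by
  set b := 1 / (2 * v) - a with hbdef
  have hb : 0 < b := by
    rw [hbdef, sub_pos, lt_div_iff₀ (by positivity)]; nlinarith
  have hcoe : (Real.toNNReal v : ℝ) = v := Real.coe_toNNReal v hv.le
  have hpdf : ∀ x : ℝ, gaussianPDFReal 0 (Real.toNNReal v) x * Real.exp (a * x ^ 2 + t * x)
      = (Real.sqrt (2 * π * v))⁻¹ * Real.exp (-b * x ^ 2 + t * x) := by
    intro x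
    rw [gaussianPDFReal, hcoe, mul_assoc, ← Real.exp_add]
    congr 2
    rw [hbdef]
    field_simp [hv.ne']
    ring
  rw [gaussian_density_integral v hv]
  simp_rw [hpdf]
  rw [integral_const_mul, integral_exp_quad _ t hb]
  have h1 : (1 : ℝ) - 2 * a * v = 2 * v * b := by
    rw [hbdef]; field_simp
  have hA : (0:ℝ) < 2 * v * b := by positivity
  rw [h1, show (-(1:ℝ)/2) = -(1/2 : ℝ) by ring, Real.rpow_neg hA.le,
    ← Real.sqrt_eq_rpow, ← Real.sqrt_inv (2 * v * b)]
  rw [← mul_assoc]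
  congr 1
  · rw [← Real.sqrt_inv (2 * π * v), ← Real.sqrt_mul (by positivity : (0:ℝ) ≤ (2 * π * v)⁻¹)]
    congr 1
    field_simp
  · congr 1
    field_simp
    ring

lemma integrable_exp_quad_gaussian (v a t : ℝ) (hv : 0 < v) (h : 2 * a * v < 1) :
    Integrable (fun x => Real.exp (a * x ^ 2 + t * x)) (gaussianReal 0 (Real.toNNReal v)) := by
  have hb : 0 < 1 / (2 * v) - a := by
    rw [sub_pos, lt_div_iff₀ (by positivity)]; nlinarith
  rw [gaussianReal_of_var_ne_zero 0 (Real.toNNReal_pos.mpr hv).ne']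
  rw [show gaussianPDF 0 (Real.toNNReal v)
      = fun x => ((Real.toNNReal (gaussianPDFReal 0 (Real.toNNReal v) x) : ℝ≥0) : ℝ≥0∞)
    from rfl]
  rw [integrable_withDensity_iff_integrable_smul
    ((measurable_gaussianPDFReal _ _).real_toNNReal)]
  have hcoe : (Real.toNNReal v : ℝ) = v := Real.coe_toNNReal v hv.le
  have heq : ∀ x : ℝ,
      (Real.toNNReal (gaussianPDFReal 0 (Real.toNNReal v) x)) • Real.exp (a * x ^ 2 + t * x)
      = (Real.sqrt (2 * π * v))⁻¹ * Real.exp (-(1 / (2 * v) - a) * x ^ 2 + t * x) := by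
    intro x
    rw [NNReal.smul_def, Real.coe_toNNReal _ (gaussianPDFReal_nonneg _ _ x),
      smul_eq_mul, gaussianPDFReal, hcoe, mul_assoc, ← Real.exp_add]
    congr 2
    field_simp [hv.ne']
    ring
  simp_rw [heq]
  exact (integrable_exp_quad _ t hb).const_mul _

lemma integral_pi_prod {n : ℕ} (μ : Measure ℝ) [IsProbabilityMeasure μ] (f : Fin n → ℝ → ℝ) :
    ∫ x : Fin n → ℝ, ∏ i, f i (x i) ∂(Measure.pi fun _ => μ) = ∏ i, ∫ x, f i x ∂μ := by
  letI : MeasureSpace ℝ := ⟨μ⟩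
  haveI : SigmaFinite (volume : Measure ℝ) := inferInstanceAs (SigmaFinite μ)
  exact MeasureTheory.integral_fintype_prod_eq_prod (ι := Fin n) f

lemma integrable_pi_prod {n : ℕ} (μ : Measure ℝ) [IsProbabilityMeasure μ] (f : Fin n → ℝ → ℝ)
    (hf : ∀ i, Integrable (f i) μ) :
    Integrable (fun x : Fin n → ℝ => ∏ i, f i (x i)) (Measure.pi fun _ => μ) := by
  letI : MeasureSpace ℝ := ⟨μ⟩
  haveI : SigmaFinite (volume : Measure ℝ) := inferInstanceAs (SigmaFinite μ)
  exact MeasureTheory.Integrable.fintype_prod hf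


end Aux

/-- Gaussian moment generating identity for the perturbation of the energy function in the
multi-variance replica exchange method:
`E[exp((τ_δ/(2σ_o²))(‖Z‖² − 2⟨X,Z⟩))] = (1 − (τ_δ + τ_δ²) r_σ)^{−n_d/2}`,
where `X` has i.i.d. `N(0, σ_o²)` coordinates, `Z` has i.i.d. `N(0, σ̃²)` coordinates,
`X` and `Z` are independent, and `r_σ = σ̃²/σ_o²` satisfies `r_σ(τ_δ² + τ_δ) < 1`. -/
theorem gaussian_energy_perturbation_expectation
    {Ω : Type*} [MeasurableSpace Ω] (P : Measure Ω) [IsProbabilityMeasure P]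
    (nd : ℕ) (hnd : 1 ≤ nd)
    (σo σt : ℝ) (hσo : 0 < σo) (hσt : 0 < σt)
    (τδ : ℝ) (hτδ : 0 < τδ)
    (hr : (σt ^ 2 / σo ^ 2) * (τδ ^ 2 + τδ) < 1)
    (X Z : Ω → Fin nd → ℝ) (hX : Measurable X) (hZ : Measurable Z)
    (hindep : IndepFun X Z P)
    (hXlaw : Measure.map X P
      = Measure.pi fun _ : Fin nd => gaussianReal 0 (Real.toNNReal (σo ^ 2)))
    (hZlaw : Measure.map Z P
      = Measure.pi fun _ : Fin nd => gaussianReal 0 (Real.toNNReal (σt ^ 2))) :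
    ∫ ω, Real.exp ((τδ / (2 * σo ^ 2)) *
        ((∑ i, (Z ω i) ^ 2) - 2 * ∑ i, X ω i * Z ω i)) ∂P
      = (1 - (τδ + τδ ^ 2) * (σt ^ 2 / σo ^ 2)) ^ (-(nd : ℝ) / 2) := by
  have hvo : (0:ℝ) < σo ^ 2 := by positivity
  have hvt : (0:ℝ) < σt ^ 2 := by positivity
  set r : ℝ := σt ^ 2 / σo ^ 2 with hrdef
  have hr0 : 0 < r := by rw [hrdef]; positivity
  set c : ℝ := τδ / (2 * σo ^ 2) with hcdef
  have hcpos : 0 < c := by rw [hcdef]; positivity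
  have hct : 2 * c * σt ^ 2 = τδ * r := by rw [hcdef, hrdef]; field_simp
  have hcσ : 2 * c * σo ^ 2 = τδ := by rw [hcdef]; field_simp
  have hQ : 0 < 1 - (τδ + τδ ^ 2) * r := by nlinarith
  have h1 : 2 * c * σt ^ 2 < 1 := by nlinarith
  have h1' : 0 < 1 - 2 * c * σt ^ 2 := by linarith
  set β : ℝ := 2 * c ^ 2 * σt ^ 2 / (1 - 2 * c * σt ^ 2) with hβdef
  have hβprop : β * (1 - 2 * c * σt ^ 2) = 2 * c ^ 2 * σt ^ 2 := by
    rw [hβdef]; field_simp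
  have h4 : 4 * c ^ 2 * σt ^ 2 * σo ^ 2 = τδ ^ 2 * r := by
    linear_combination τδ * hct + (2 * c * σt ^ 2) * hcσ
  have hK : (1 - 2 * c * σt ^ 2) * (1 - 2 * β * σo ^ 2) = 1 - (τδ + τδ ^ 2) * r := by
    linear_combination (-2 * σo ^ 2) * hβprop - hct - h4
  have h2' : 0 < 1 - 2 * β * σo ^ 2 := by nlinarith [hK, h1', hQ]
  have h2 : 2 * β * σo ^ 2 < 1 := by linarith
  -- the measures
  set μ0 := gaussianReal 0 (Real.toNNReal (σo ^ 2)) with hμ0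
  set ν0 := gaussianReal 0 (Real.toNNReal (σt ^ 2)) with hν0
  set μpi := Measure.pi fun _ : Fin nd => μ0 with hμpi
  set νpi := Measure.pi fun _ : Fin nd => ν0 with hνpi
  set G : (Fin nd → ℝ) × (Fin nd → ℝ) → ℝ :=
    fun p => Real.exp (c * ((∑ i, (p.2 i) ^ 2) - 2 * ∑ i, p.1 i * p.2 i)) with hGdef
  have hGmeas : Measurable G := by
    apply Measurable.exp
    apply Measurable.const_mul
    apply Measurable.sub
    · exact Finset.measurable_sum _ fun i _ =>
        ((measurable_pi_apply i).comp measurable_snd).pow_const 2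
    · exact (Finset.measurable_sum _ fun i _ =>
        ((measurable_pi_apply i).comp measurable_fst).mul
          ((measurable_pi_apply i).comp measurable_snd)).const_mul 2
  have hmap : Measure.map (fun ω => (X ω, Z ω)) P = μpi.prod νpi := by
    rw [← hXlaw, ← hZlaw]
    exact (indepFun_iff_map_prod_eq_prod_map_map hX.aemeasurable hZ.aemeasurable).mp hindep
  have hrw : ∫ ω, Real.exp (c * ((∑ i, (Z ω i) ^ 2) - 2 * ∑ i, X ω i * Z ω i)) ∂P
      = ∫ p, G p ∂(μpi.prod νpi) := by
    rw [← hmap, integral_map (hX.prodMk hZ).aemeasurable hGmeas.aestronglyMeasurable]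
  have hfac : ∀ (x z : Fin nd → ℝ),
      Real.exp (c * ((∑ i, (z i) ^ 2) - 2 * ∑ i, x i * z i))
      = ∏ i, Real.exp (c * (z i) ^ 2 + (-2 * c * (x i)) * (z i)) := by
    intro x z
    rw [← Real.exp_sum]
    congr 1
    have h : ∀ i : Fin nd, c * (z i) ^ 2 + (-2 * c * (x i)) * (z i)
        = c * (z i) ^ 2 + (-(2 * c)) * (x i * z i) := fun i => by ring
    simp_rw [h]
    rw [Finset.sum_add_distrib, ← Finset.mul_sum, ← Finset.mul_sum]
    ring
  have hinner : ∀ x : Fin nd → ℝ,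
      (∫ z : Fin nd → ℝ, ∏ i, Real.exp (c * (z i) ^ 2 + (-2 * c * (x i)) * (z i)) ∂νpi)
      = ∏ i, ((1 - 2 * c * σt ^ 2) ^ (-(1:ℝ)/2) * Real.exp (β * (x i) ^ 2)) := by
    intro x
    have hip : (∫ z : Fin nd → ℝ,
          ∏ i, Real.exp (c * (z i) ^ 2 + (-2 * c * (x i)) * (z i)) ∂νpi)
        = ∏ i, ∫ y : ℝ, Real.exp (c * y ^ 2 + (-2 * c * (x i)) * y) ∂ν0 := by
      rw [hνpi]
      exact integral_pi_prod ν0 (fun i y => Real.exp (c * y ^ 2 + (-2 * c * (x i)) * y))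
    rw [hip]
    refine Finset.prod_congr rfl fun i _ => ?_
    rw [hν0]
    rw [integral_exp_quad_gaussian (σt ^ 2) c (-2 * c * (x i)) hvt h1]
    congr 2
    rw [hβdef]
    field_simp
  have hint1 : ∀ x : Fin nd → ℝ, Integrable (fun z => G (x, z)) νpi := by
    intro x
    have : (fun z : Fin nd → ℝ => G (x, z))
        = fun z => ∏ i, Real.exp (c * (z i) ^ 2 + (-2 * c * (x i)) * (z i)) := by
      funext z; exact hfac x z
    rw [this, hνpi, hν0]
    exact integrable_pi_prod _ _ fun i => integrable_exp_quad_gaussian _ c _ hvt h1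
  have houter_fun : ∀ x : Fin nd → ℝ,
      (∫ z, G (x, z) ∂νpi)
      = ∏ i, ((1 - 2 * c * σt ^ 2) ^ (-(1:ℝ)/2) * Real.exp (β * (x i) ^ 2)) := by
    intro x
    rw [show (fun z => G (x, z))
        = fun z => ∏ i, Real.exp (c * (z i) ^ 2 + (-2 * c * (x i)) * (z i)) from
      funext fun z => hfac x z]
    exact hinner x
  have hout_int : Integrable
      (fun x : Fin nd → ℝ =>
        ∏ i, ((1 - 2 * c * σt ^ 2) ^ (-(1:ℝ)/2) * Real.exp (β * (x i) ^ 2))) μpi := by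
    rw [hμpi, hμ0]
    refine integrable_pi_prod _
      (fun _ y => (1 - 2 * c * σt ^ 2) ^ (-(1:ℝ)/2) * Real.exp (β * y ^ 2)) fun i => ?_
    have : (fun y : ℝ => (1 - 2 * c * σt ^ 2) ^ (-(1:ℝ)/2) * Real.exp (β * y ^ 2))
        = fun y => (1 - 2 * c * σt ^ 2) ^ (-(1:ℝ)/2) * Real.exp (β * y ^ 2 + 0 * y) := by
      funext y; norm_num
    rw [this]
    exact (integrable_exp_quad_gaussian _ β 0 hvo h2).const_mul _
  have hInt : Integrable G (μpi.prod νpi) := by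
    rw [integrable_prod_iff hGmeas.aestronglyMeasurable]
    constructor
    · exact Filter.Eventually.of_forall hint1
    · have : (fun x : Fin nd → ℝ => ∫ z, ‖G (x, z)‖ ∂νpi)
          = fun x => ∏ i, ((1 - 2 * c * σt ^ 2) ^ (-(1:ℝ)/2) * Real.exp (β * (x i) ^ 2)) := by
        funext x
        rw [← houter_fun x]
        congr 1
        funext z
        rw [Real.norm_eq_abs, abs_of_pos (Real.exp_pos _)]
      rw [this]
      exact hout_int
  -- main computation
  rw [hrw, integral_prod _ hInt]
  rw [show (fun x => ∫ z, G (x, z) ∂νpi)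
      = fun x : Fin nd → ℝ =>
          ∏ i, ((1 - 2 * c * σt ^ 2) ^ (-(1:ℝ)/2) * Real.exp (β * (x i) ^ 2)) from
    funext houter_fun]
  have hfinal : (∫ x : Fin nd → ℝ,
        ∏ i, ((1 - 2 * c * σt ^ 2) ^ (-(1:ℝ)/2) * Real.exp (β * (x i) ^ 2)) ∂μpi)
      = ∏ i : Fin nd, ∫ y : ℝ, (1 - 2 * c * σt ^ 2) ^ (-(1:ℝ)/2)
          * Real.exp (β * y ^ 2) ∂(gaussianReal 0 (Real.toNNReal (σo ^ 2))) := by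
    rw [hμpi, hμ0]
    exact integral_pi_prod _
      (fun i y => (1 - 2 * c * σt ^ 2) ^ (-(1:ℝ)/2) * Real.exp (β * y ^ 2))
  rw [hfinal]
  have hone : ∀ i : Fin nd, (∫ y : ℝ, (1 - 2 * c * σt ^ 2) ^ (-(1:ℝ)/2)
        * Real.exp (β * y ^ 2) ∂(gaussianReal 0 (Real.toNNReal (σo ^ 2))))
      = (1 - 2 * c * σt ^ 2) ^ (-(1:ℝ)/2) * (1 - 2 * β * σo ^ 2) ^ (-(1:ℝ)/2) := by
    intro i
    rw [integral_const_mul]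
    rw [show (fun y : ℝ => Real.exp (β * y ^ 2))
        = fun y => Real.exp (β * y ^ 2 + 0 * y) from funext fun y => by norm_num]
    rw [integral_exp_quad_gaussian _ β 0 hvo h2]
    norm_num
  rw [Finset.prod_congr rfl fun i _ => hone i, Finset.prod_const, Finset.card_univ,
    Fintype.card_fin]
  rw [← Real.mul_rpow h1'.le h2'.le, hK]
  rw [← Real.rpow_natCast ((1 - (τδ + τδ ^ 2) * r) ^ (-(1:ℝ)/2)) nd, ← Real.rpow_mul hQ.le]
  congr 1
  push_cast
  ring
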